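/- Let R = K[[X, Y]]/(XY, Y²) where K is a field, and let x, y denote the images of X, Y. Then the set of trace ideals of R is exactly {0, (y), (x, y), R}. -/

import Mathlib

open MvPowerSeries Finsupp

noncomputable section
variable {K : Type*} [Field K]

lemma fin2_eq_single {d : Fin 2 →₀ ℕ} (h : d 1 = 0) : d = single 0 (d 0) := by
  ext a; fin_cases a <;> simp [Finsupp.single_apply, h]

def embFun (f : PowerSeries K) : MvPowerSeries (Fin 2) K :=
  fun d => if d 1 = 0 then PowerSeries.coeff (d 0) f else 0

lemma coeff_embFun (f : PowerSeries K) (d : Fin 2 →₀ ℕ) :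
    MvPowerSeries.coeff d (embFun f) = if d 1 = 0 then PowerSeries.coeff (d 0) f else 0 :=
  rfl

lemma apply1_of_mem_antidiagonal {d : Fin 2 →₀ ℕ} (h : d 1 = 0)
    {p : (Fin 2 →₀ ℕ) × (Fin 2 →₀ ℕ)} (hp : p ∈ Finset.HasAntidiagonal.antidiagonal d) :
    p.1 1 = 0 ∧ p.2 1 = 0 := by
  rw [Finset.HasAntidiagonal.mem_antidiagonal] at hp
  have := congrArg (fun e : Fin 2 →₀ ℕ => e 1) hp
  simp only [Finsupp.add_apply] at this
  omega

lemma mulkey (f g : PowerSeries K) {d : Fin 2 →₀ ℕ} (h : d 1 = 0) :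
    ∑ p ∈ Finset.HasAntidiagonal.antidiagonal d,
      MvPowerSeries.coeff p.1 (embFun f) * MvPowerSeries.coeff p.2 (embFun g)
    = ∑ q ∈ Finset.HasAntidiagonal.antidiagonal (d 0), PowerSeries.coeff q.1 f * PowerSeries.coeff q.2 g := by
  refine Finset.sum_nbij' (fun p => (p.1 0, p.2 0))
      (fun q => (single 0 q.1, single 0 q.2)) ?_ ?_ ?_ ?_ ?_
  · intro p hp
    rw [Finset.HasAntidiagonal.mem_antidiagonal] at hp ⊢
    rw [← hp]; rfl
  · intro q hq
    rw [Finset.HasAntidiagonal.mem_antidiagonal] at hq ⊢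
    rw [← single_add, hq, ← fin2_eq_single h]
  · intro p hp
    obtain ⟨h1, h2⟩ := apply1_of_mem_antidiagonal h hp
    ext : 1
    · exact (fin2_eq_single h1).symm
    · exact (fin2_eq_single h2).symm
  · intro q hq; simp
  · intro p hp
    obtain ⟨h1, h2⟩ := apply1_of_mem_antidiagonal h hp
    rw [coeff_embFun, coeff_embFun, if_pos h1, if_pos h2]

def emb : PowerSeries K →+* MvPowerSeries (Fin 2) K where
  toFun := embFun
  map_one' := by
    ext d
    rw [coeff_embFun, MvPowerSeries.coeff_one]
    by_cases h : d 1 = 0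
    · rw [if_pos h, PowerSeries.coeff_one]
      by_cases h0 : d 0 = 0
      · rw [if_pos h0, if_pos]
        ext a; fin_cases a <;> simp [h, h0]
      · rw [if_neg h0, if_neg]
        intro hd; apply h0; rw [hd]; simp
    · rw [if_neg h, if_neg]
      intro hd; apply h; rw [hd]; simp
  map_mul' := by
    intro f g
    show embFun (f * g) = _
    ext d
    rw [MvPowerSeries.coeff_mul, coeff_embFun]
    by_cases h : d 1 = 0
    · rw [if_pos h, PowerSeries.coeff_mul]
      exact (mulkey f g h).symm
    · rw [if_neg h]
      symm
      apply Finset.sum_eq_zero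
      intro p hp
      rw [Finset.HasAntidiagonal.mem_antidiagonal] at hp
      have : p.1 1 ≠ 0 ∨ p.2 1 ≠ 0 := by
        by_contra hc
        push_neg at hc
        apply h
        have := congrArg (fun e : Fin 2 →₀ ℕ => e 1) hp
        simp only [Finsupp.add_apply] at this
        omega
      rcases this with h1 | h1
      · rw [coeff_embFun f, if_neg h1, zero_mul]
      · rw [coeff_embFun g, if_neg h1, mul_zero]
  map_zero' := by
    ext d; rw [coeff_embFun]; simp
  map_add' := by
    intro f g
    show embFun (f + g) = embFun f + embFun g
    ext d
    rw [map_add, coeff_embFun, coeff_embFun, coeff_embFun]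
    split_ifs <;> simp

lemma coeff_emb (f : PowerSeries K) (d : Fin 2 →₀ ℕ) :
    MvPowerSeries.coeff d (emb f) = if d 1 = 0 then PowerSeries.coeff (d 0) f else 0 :=
  rfl

lemma emb_X : (emb (PowerSeries.X : PowerSeries K)) = MvPowerSeries.X 0 := by
  ext d
  rw [coeff_emb, MvPowerSeries.coeff_X]
  by_cases h : d 1 = 0
  · rw [if_pos h, PowerSeries.coeff_X]
    by_cases h0 : d 0 = 1
    · rw [if_pos h0, if_pos]; rw [fin2_eq_single h, h0]
    · rw [if_neg h0, if_neg]
      intro hd; apply h0; rw [hd]; simp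
  · rw [if_neg h, if_neg]
    intro hd; apply h; rw [hd]; simp

lemma constantCoeff_emb (f : PowerSeries K) :
    MvPowerSeries.constantCoeff (emb f) = PowerSeries.constantCoeff f := by
  show (emb f) 0 = _
  rw [emb]
  show embFun f 0 = _
  rw [embFun]; simp

lemma emb_C (b : K) : emb (PowerSeries.C b) = MvPowerSeries.C b := by
  ext d
  rw [coeff_emb, MvPowerSeries.coeff_C]
  by_cases h : d 1 = 0
  · rw [if_pos h, PowerSeries.coeff_C]
    by_cases h0 : d 0 = 0
    · rw [if_pos h0, if_pos]; ext a; fin_cases a <;> simp [h, h0]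
    · rw [if_neg h0, if_neg]; intro hd; apply h0; rw [hd]; simp
  · rw [if_neg h, if_neg]; intro hd; apply h; rw [hd]; simp

lemma XY_eq : (MvPowerSeries.X 0 * MvPowerSeries.X 1 : MvPowerSeries (Fin 2) K)
    = monomial (single 0 1 + single 1 1) 1 := by
  rw [X, X, monomial_mul_monomial, one_mul]

lemma Y2_eq : ((MvPowerSeries.X 1)^2 : MvPowerSeries (Fin 2) K)
    = monomial (single 1 2) 1 := by rw [X_pow_eq]

lemma mem_J_iff (P : MvPowerSeries (Fin 2) K) :
    P ∈ Ideal.span {MvPowerSeries.X 0 * MvPowerSeries.X 1,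
        (MvPowerSeries.X (1:Fin 2))^2} ↔
      (∀ k, MvPowerSeries.coeff (single 0 k) P = 0) ∧
        MvPowerSeries.coeff (single 1 1) P = 0 := by
  rw [Ideal.mem_span_pair]
  constructor
  · rintro ⟨A, B, rfl⟩
    constructor
    · intro k
      rw [map_add, XY_eq, Y2_eq, mul_comm A, mul_comm B,
          coeff_monomial_mul, coeff_monomial_mul, if_neg, if_neg, add_zero]
      · intro hle
        have h2 := hle 1
        simp [Finsupp.single_apply] at h2
      · intro hle
        have h2 := hle 1
        simp [Finsupp.single_apply] at h2
    · rw [map_add, XY_eq, Y2_eq, mul_comm A, mul_comm B,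
          coeff_monomial_mul, coeff_monomial_mul, if_neg, if_neg, add_zero]
      · intro hle
        have h2 := hle 1
        simp [Finsupp.single_apply] at h2
      · intro hle
        have h1 := hle 0
        simp [Finsupp.single_apply] at h1
  · rintro ⟨h0, h1⟩
    set n1 : Fin 2 →₀ ℕ := single 0 1 + single 1 1 with hn1
    set n2 : Fin 2 →₀ ℕ := single 1 2 with hn2
    set A : MvPowerSeries (Fin 2) K :=
      fun m => if m 1 = 0 then MvPowerSeries.coeff (m + n1) P else 0 with hA
    set B : MvPowerSeries (Fin 2) K :=
      fun m => MvPowerSeries.coeff (m + n2) P with hB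
    have hn1le : ∀ d : Fin 2 →₀ ℕ, n1 ≤ d ↔ 1 ≤ d 0 ∧ 1 ≤ d 1 := by
      intro d
      constructor
      · intro hle
        have ha := hle 0
        have hb := hle 1
        simp [hn1, Finsupp.add_apply, Finsupp.single_apply] at ha hb
        exact ⟨ha, hb⟩
      · rintro ⟨ha, hb⟩ i
        fin_cases i <;> simp [hn1, Finsupp.add_apply, Finsupp.single_apply] <;> assumption
    have hn2le : ∀ d : Fin 2 →₀ ℕ, n2 ≤ d ↔ 2 ≤ d 1 := by
      intro d
      constructor
      · intro hle
        have hb := hle 1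
        simp [hn2, Finsupp.single_apply] at hb
        exact hb
      · intro hb i
        fin_cases i <;> simp [hn2, Finsupp.single_apply] <;> omega
    have key1 : ∀ d : Fin 2 →₀ ℕ,
        MvPowerSeries.coeff d (A * (MvPowerSeries.X 0 * MvPowerSeries.X 1)) =
          if 1 ≤ d 0 ∧ d 1 = 1 then MvPowerSeries.coeff d P else 0 := by
      intro d
      rw [XY_eq, ← hn1, coeff_mul_monomial, mul_one]
      by_cases hle : n1 ≤ d
      · rw [if_pos hle, coeff_apply, hA]
        dsimp only
        have hd1 : (d - n1) 1 = d 1 - 1 := by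
          rw [Finsupp.tsub_apply]; simp [hn1, Finsupp.add_apply, Finsupp.single_apply]
        have h1le := (hn1le d).mp hle
        rw [hd1, tsub_add_cancel_of_le hle]
        by_cases hcase : d 1 = 1
        · rw [if_pos (by omega), if_pos ⟨h1le.1, hcase⟩]
        · rw [if_neg (by omega), if_neg (fun hcon => hcase hcon.2)]
      · rw [if_neg hle, if_neg]
        rw [hn1le] at hle
        intro hcon
        exact hle ⟨hcon.1, by omega⟩
    have key2 : ∀ d : Fin 2 →₀ ℕ,
        MvPowerSeries.coeff d (B * (MvPowerSeries.X 1)^2) =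
          if 2 ≤ d 1 then MvPowerSeries.coeff d P else 0 := by
      intro d
      rw [Y2_eq, ← hn2, coeff_mul_monomial, mul_one]
      by_cases hle : n2 ≤ d
      · rw [if_pos hle, coeff_apply, hB]
        dsimp only
        rw [if_pos ((hn2le d).mp hle), tsub_add_cancel_of_le hle]
      · rw [if_neg hle, if_neg (by rw [hn2le] at hle; exact hle)]
    refine ⟨A, B, ?_⟩
    ext d
    rw [map_add, key1, key2]
    by_cases hd1 : d 1 = 0
    · rw [if_neg (show ¬(1 ≤ d 0 ∧ d 1 = 1) from fun h => by omega),
          if_neg (show ¬(2 ≤ d 1) by omega), add_zero]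
      rw [fin2_eq_single hd1]
      exact (h0 _).symm
    by_cases hd2 : d 1 = 1
    · rw [if_neg (show ¬(2 ≤ d 1) by omega), add_zero]
      by_cases hd0 : 1 ≤ d 0
      · rw [if_pos ⟨hd0, hd2⟩]
      · rw [if_neg (fun h => hd0 h.1)]
        have hds : d = single 1 1 := by
          ext a; fin_cases a <;> simp [Finsupp.single_apply] <;> omega
        rw [hds]
        exact h1.symm
    · rw [if_neg (show ¬(1 ≤ d 0 ∧ d 1 = 1) from fun h => hd2 h.2),
          if_pos (show 2 ≤ d 1 by omega), zero_add]

lemma coeff_single0_mul_X1 (F : MvPowerSeries (Fin 2) K) (k : ℕ) :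
    MvPowerSeries.coeff (single 0 k) (F * MvPowerSeries.X 1) = 0 := by
  rw [X, coeff_mul_monomial, if_neg, ]
  intro hle
  have := hle 1
  simp [Finsupp.single_apply] at this

lemma coeff_single11_mul_X1 (F : MvPowerSeries (Fin 2) K) :
    MvPowerSeries.coeff (single 1 1) (F * MvPowerSeries.X 1)
      = MvPowerSeries.constantCoeff F := by
  rw [X, coeff_mul_monomial, if_pos le_rfl, tsub_self, mul_one]
  rfl

lemma CX1_eq (b : K) : (MvPowerSeries.C b : MvPowerSeries (Fin 2) K) * MvPowerSeries.X 1
    = monomial (single 1 1) b := by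
  show monomial 0 b * _ = _
  rw [X, monomial_mul_monomial, zero_add, mul_one]

lemma coeff_single0_combo (f : PowerSeries K) (b : K) (k : ℕ) :
    MvPowerSeries.coeff (single 0 k)
      (emb f + MvPowerSeries.C b * MvPowerSeries.X 1) = PowerSeries.coeff k f := by
  rw [map_add, coeff_emb, CX1_eq, coeff_monomial, if_pos (by simp), if_neg, add_zero]
  · simp
  · intro h
    have := congrArg (fun e : Fin 2 →₀ ℕ => e 1) h
    simp [Finsupp.single_apply] at this

lemma coeff_single11_combo (f : PowerSeries K) (b : K) :
    MvPowerSeries.coeff (single 1 1)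
      (emb f + MvPowerSeries.C b * MvPowerSeries.X 1) = b := by
  rw [map_add, coeff_emb, CX1_eq, coeff_monomial, if_pos rfl, if_neg, zero_add]
  simp [Finsupp.single_apply]

end
/-- The trace ideal of an `R`-module `M`. -/
def traceIdeal (R : Type*) [CommRing R] (M : Type*) [AddCommGroup M] [Module R M] : Ideal R :=
  ⨆ f : M →ₗ[R] R, LinearMap.range f

/-- Let `R = K[[X, Y]]/(XY, Y²)` over a field `K`, with `x, y` the images of `X, Y`.
Then the trace ideals of `R` are exactly `0`, `(y)`, `(x, y)` and `R`. -/
theorem traceIdeals_of_example (K : Type*) [Field K]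
    (R : Type*) [CommRing R]
    (π : MvPowerSeries (Fin 2) K →+* R) (hπ : Function.Surjective π)
    (hker : RingHom.ker π =
      Ideal.span {MvPowerSeries.X 0 * MvPowerSeries.X 1, (MvPowerSeries.X 1) ^ 2})
    (x y : R) (hx : x = π (MvPowerSeries.X 0)) (hy : y = π (MvPowerSeries.X 1)) :
    {I : Ideal R | traceIdeal R I = I} =
      {⊥, Ideal.span {y}, Ideal.span {x, y}, ⊤} := by
  classical
  -- trace ideal generalities
  have mem_trace : ∀ (I : Ideal R) (f : ↥I →ₗ[R] R) (w : ↥I), f w ∈ traceIdeal R I := by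
    intro I f w
    exact Submodule.mem_iSup_of_mem f ⟨w, rfl⟩
  have le_trace : ∀ I : Ideal R, I ≤ traceIdeal R I := by
    intro I a ha
    exact Submodule.mem_iSup_of_mem (Submodule.subtype I) ⟨⟨a, ha⟩, rfl⟩
  have trace_le : ∀ (I J : Ideal R), (∀ f : ↥I →ₗ[R] R, LinearMap.range f ≤ J) →
      traceIdeal R I ≤ J := by
    intro I J h
    exact iSup_le h
  -- basic relations
  have hxy : x * y = 0 := by
    rw [hx, hy, ← map_mul, ← RingHom.mem_ker, hker]
    exact Ideal.subset_span (Set.mem_insert _ _)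
  have hyy : y * y = 0 := by
    have : ((MvPowerSeries.X 1 : MvPowerSeries (Fin 2) K)) ^ 2 ∈ RingHom.ker π := by
      rw [hker]; exact Ideal.subset_span (Set.mem_insert_of_mem _ rfl)
    rw [RingHom.mem_ker, map_pow, pow_two] at this
    rw [hy]; exact this
  set κ : K → R := fun b => π (MvPowerSeries.C b) with hκ
  have hκ0 : κ 0 = 0 := by simp [hκ]
  have hκ1 : κ 1 = 1 := by simp [hκ]
  have hκadd : ∀ a b, κ (a + b) = κ a + κ b := by intro a b; simp [hκ]
  have hκmul : ∀ a b, κ (a * b) = κ a * κ b := by intro a b; simp [hκ]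
  have hκunit : ∀ b : K, b ≠ 0 → IsUnit (κ b) := by
    intro b hb
    refine IsUnit.of_mul_eq_one (κ b⁻¹) ?_
    rw [← hκmul, mul_inv_cancel₀ hb, hκ1]
  have hpi_eq : ∀ F G : MvPowerSeries (Fin 2) K,
      ((∀ k, MvPowerSeries.coeff (single 0 k) F = MvPowerSeries.coeff (single 0 k) G) ∧
        MvPowerSeries.coeff (single 1 1) F = MvPowerSeries.coeff (single 1 1) G)
        ↔ π F = π G := by
    intro F G
    rw [← sub_eq_zero (a := π F), ← map_sub, ← RingHom.mem_ker, hker, mem_J_iff]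
    simp [sub_eq_zero]
  -- decomposition
  have decomp : ∀ r : R, ∃ fb : PowerSeries K × K, r = π (emb fb.1) + κ fb.2 * y := by
    intro r
    obtain ⟨F, rfl⟩ := hπ r
    refine ⟨⟨PowerSeries.mk fun k => MvPowerSeries.coeff (single 0 k) F,
      MvPowerSeries.coeff (single 1 1) F⟩, ?_⟩
    rw [hκ, hy, ← map_mul, ← map_add]
    refine ((hpi_eq _ _).mp ⟨fun k => ?_, ?_⟩)
    · rw [coeff_single0_combo]
      simp
    · rw [coeff_single11_combo]
  have huniq : ∀ (f g : PowerSeries K) (b c : K),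
      π (emb f) + κ b * y = π (emb g) + κ c * y → f = g ∧ b = c := by
    intro f g b c h
    simp only [hκ, hy, ← map_mul, ← map_add] at h
    obtain ⟨h0, h1⟩ := (hpi_eq _ _).mpr h
    constructor
    · ext k
      have := h0 k
      rwa [coeff_single0_combo, coeff_single0_combo] at this
    · have := h1
      rwa [coeff_single11_combo, coeff_single11_combo] at this
  choose cp hcp using decomp
  have hchar : ∀ (r : R) (f : PowerSeries K) (b : K),
      r = π (emb f) + κ b * y → (cp r).1 = f ∧ (cp r).2 = b := by
    intro r f b h
    exact huniq _ _ _ _ ((hcp r).symm.trans h)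
  have hembdec : ∀ f : PowerSeries K, (cp (π (emb f))).1 = f ∧ (cp (π (emb f))).2 = 0 := by
    intro f
    exact hchar _ f 0 (by rw [hκ0, zero_mul, add_zero])
  have hxdec : (cp x).1 = PowerSeries.X ∧ (cp x).2 = 0 := by
    have := hembdec PowerSeries.X
    rwa [emb_X, ← hx] at this
  have hydec : (cp y).1 = 0 ∧ (cp y).2 = 1 := by
    refine hchar y 0 1 ?_
    rw [map_zero, map_zero, hκ1, zero_add, one_mul]
  have hzero : ∀ r : R, r = 0 ↔ ((cp r).1 = 0 ∧ (cp r).2 = 0) := by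
    intro r
    constructor
    · rintro rfl
      exact hchar 0 0 0 (by rw [map_zero, map_zero, hκ0, zero_mul, add_zero])
    · rintro ⟨h1, h2⟩
      rw [hcp r, h1, h2, map_zero, map_zero, hκ0, zero_mul, add_zero]
  have hy0 : y ≠ 0 := by
    intro h
    have := (hzero y).mp h
    rw [hydec.2] at this
    exact one_ne_zero this.2
  have hCy : ∀ f : PowerSeries K, π (emb f) * y = κ (PowerSeries.constantCoeff f) * y := by
    intro f
    rw [hκ, hy, ← map_mul, ← map_mul]
    refine (hpi_eq _ _).mp ⟨fun k => ?_, ?_⟩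
    · rw [coeff_single0_mul_X1, coeff_single0_mul_X1]
    · rw [coeff_single11_mul_X1, coeff_single11_mul_X1, constantCoeff_emb]
      simp
  have hmulexp : ∀ (f g : PowerSeries K) (b c : K),
      (π (emb f) + κ b * y) * (π (emb g) + κ c * y) =
        π (emb (f * g)) + κ (b * PowerSeries.constantCoeff g
          + c * PowerSeries.constantCoeff f) * y := by
    intro f g b c
    have e1 : (π (emb f) + κ b * y) * (π (emb g) + κ c * y)
        = π (emb f) * π (emb g) + κ c * (π (emb f) * y) + κ b * (π (emb g) * y)
          + (κ b * κ c) * (y * y) := by ring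
    rw [e1, hyy, mul_zero, add_zero, hCy f, hCy g,
      show emb (f * g) = emb f * emb g from map_mul emb f g, map_mul, hκadd, hκmul, hκmul]
    ring
  have haddc : ∀ r s : R, (cp (r + s)).1 = (cp r).1 + (cp s).1
      ∧ (cp (r + s)).2 = (cp r).2 + (cp s).2 := by
    intro r s
    refine hchar _ _ _ ?_
    conv_lhs => rw [hcp r, hcp s]
    rw [map_add, map_add, hκadd]
    ring
  have hmulc : ∀ r s : R, (cp (r * s)).1 = (cp r).1 * (cp s).1
      ∧ (cp (r * s)).2 = (cp r).2 * PowerSeries.constantCoeff (cp s).1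
        + (cp s).2 * PowerSeries.constantCoeff (cp r).1 := by
    intro r s
    refine hchar _ _ _ ?_
    conv_lhs => rw [hcp r, hcp s]
    exact hmulexp _ _ _ _
  have hry : ∀ r : R, r * y = κ (PowerSeries.constantCoeff (cp r).1) * y := by
    intro r
    conv_lhs => rw [hcp r]
    rw [add_mul, mul_assoc, hyy, mul_zero, add_zero, hCy]
  have hrx : ∀ r : R, r * x = π (emb ((cp r).1 * PowerSeries.X)) := by
    intro r
    conv_lhs => rw [hcp r]
    rw [map_mul, map_mul, emb_X, ← hx, add_mul, mul_assoc, mul_comm y x, hxy,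
      mul_zero, add_zero]
  have hκyinj : ∀ b : K, κ b * y = 0 → b = 0 := by
    intro b h
    have h2 : π (emb 0) + κ b * y = π (emb 0) + κ 0 * y := by
      rw [h, hκ0, zero_mul]
    exact (huniq 0 0 b 0 h2).2
  have hunit : ∀ r : R, PowerSeries.constantCoeff (cp r).1 ≠ 0 → IsUnit r := by
    intro r h0
    have hfu : IsUnit (cp r).1 :=
      PowerSeries.isUnit_iff_constantCoeff.mpr (isUnit_iff_ne_zero.mpr h0)
    have hvu : IsUnit (π (emb (cp r).1)) := by
      obtain ⟨u, hu⟩ := hfu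
      exact (hu ▸ u.isUnit).map ((π : MvPowerSeries (Fin 2) K →+* R).comp emb)
    obtain ⟨v, hv⟩ := hvu
    have key : r = ↑v * (1 + (↑v⁻¹ * κ (cp r).2) * y) := by
      have e : (↑v : R) * (1 + (↑v⁻¹ * κ (cp r).2) * y)
          = ↑v * 1 + (↑v * ↑v⁻¹) * (κ (cp r).2 * y) := by ring
      rw [e, Units.mul_inv, one_mul, mul_one, hv, ← hcp r]
    rw [key]
    refine v.isUnit.mul (IsUnit.of_mul_eq_one (1 - (↑v⁻¹ * κ (cp r).2) * y) ?_)
    have e2 : (1 + (↑v⁻¹ * κ (cp r).2) * y) * (1 - (↑v⁻¹ * κ (cp r).2) * y)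
        = 1 - ((↑v⁻¹ * κ (cp r).2) * (↑v⁻¹ * κ (cp r).2)) * (y * y) := by ring
    rw [e2, hyy, mul_zero, sub_zero]
  -- spelling out membership in span{x, y}
  have hspan_xy : ∀ r : R, PowerSeries.constantCoeff (cp r).1 = 0 →
      r ∈ Ideal.span {x, y} := by
    intro r h0
    obtain ⟨s, hs⟩ := PowerSeries.X_dvd_iff.mpr h0
    refine Ideal.mem_span_pair.mpr ⟨π (emb s), κ (cp r).2, ?_⟩
    have h1 : π (emb s) * x = π (emb ((cp r).1)) := by
      rw [hs, hx, ← emb_X, ← map_mul, ← map_mul]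
      congr 1
      rw [mul_comm]
    rw [h1, ← hcp r]
  -- the set equality
  ext I
  simp only [Set.mem_setOf_eq, Set.mem_insert_iff, Set.mem_singleton_iff]
  constructor
  · intro hI
    by_cases hbot : I = ⊥
    · exact Or.inl hbot
    by_cases htop : I = ⊤
    · exact Or.inr (Or.inr (Or.inr htop))
    by_cases hsy : I ≤ Ideal.span {y}
    · -- I = span {y}
      refine Or.inr (Or.inl ?_)
      obtain ⟨w, hwI, hw0⟩ := Submodule.ne_bot_iff I |>.mp hbot
      obtain ⟨c, hc⟩ := Ideal.mem_span_singleton.mp (hsy hwI)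
      set b : K := PowerSeries.constantCoeff (cp c).1 with hb
      have hw : w = κ b * y := by
        rw [hc, mul_comm y c]
        exact hry c
      have hb0 : b ≠ 0 := by
        intro h
        apply hw0
        rw [hw, h, hκ0, zero_mul]
      have hyI : y ∈ I := by
        have h1 : κ b⁻¹ * w ∈ I := Ideal.mul_mem_left I _ hwI
        have h2 : κ b⁻¹ * w = y := by
          rw [hw, ← mul_assoc, ← hκmul, inv_mul_cancel₀ hb0, hκ1, one_mul]
        rwa [h2] at h1
      exact le_antisymm hsy (Ideal.span_le.mpr (Set.singleton_subset_iff.mpr hyI))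
    · -- I = span {x, y}
      refine Or.inr (Or.inr (Or.inl ?_))
      have hc0 : ∀ w ∈ I, PowerSeries.constantCoeff (cp w).1 = 0 := by
        intro w hw
        by_contra h
        exact htop (Ideal.eq_top_of_isUnit_mem I hw (hunit w h))
      have hIm : I ≤ Ideal.span {x, y} := fun w hw => hspan_xy w (hc0 w hw)
      have hzex : ∃ z ∈ I, (cp z).1 ≠ 0 := by
        by_contra h
        push_neg at h
        refine hsy (fun w hw => ?_)
        have hw' : w = κ (cp w).2 * y := by
          conv_lhs => rw [hcp w]
          rw [h w hw, map_zero, map_zero, zero_add]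
        refine Ideal.mem_span_singleton.mpr ⟨κ (cp w).2, ?_⟩
        conv_lhs => rw [hw']
        rw [mul_comm]
      obtain ⟨z, hzI, hz1⟩ := hzex
      set Sset := {k : ℕ | ∃ w ∈ I, PowerSeries.coeff k (cp w).1 ≠ 0} with hSset
      have hSne : Sset.Nonempty := by
        have : ∃ k, PowerSeries.coeff k (cp z).1 ≠ 0 := by
          by_contra h
          push_neg at h
          exact hz1 (PowerSeries.ext h)
        obtain ⟨k, hk⟩ := this
        exact ⟨k, z, hzI, hk⟩
      set n := sInf Sset with hn
      obtain ⟨z', hz'I, hz'c⟩ := Nat.sInf_mem hSne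
      have hdvd : ∀ w ∈ I, (PowerSeries.X : PowerSeries K) ^ n ∣ (cp w).1 := by
        intro w hw
        rw [PowerSeries.X_pow_dvd_iff]
        intro m hm
        by_contra hcon
        have hmem : m ∈ Sset := ⟨w, hw, hcon⟩
        have hle := Nat.sInf_le hmem
        rw [← hn] at hle
        omega
      have hdvd' : ∀ w : ↥I, ∃ u, (cp w.1).1 = PowerSeries.X ^ n * u := by
        intro w
        obtain ⟨u, hu⟩ := hdvd w.1 w.2
        exact ⟨u, hu⟩
      choose t ht using hdvd'
      have hXn0 : (PowerSeries.X : PowerSeries K) ^ n ≠ 0 :=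
        pow_ne_zero _ PowerSeries.X_ne_zero
      have ht_unique : ∀ (w : ↥I) (u : PowerSeries K),
          (cp w.1).1 = PowerSeries.X ^ n * u → t w = u := by
        intro w u h
        exact mul_left_cancel₀ hXn0 ((ht w).symm.trans h)
      have ht_add : ∀ v w : ↥I, t (v + w) = t v + t w := by
        intro v w
        refine ht_unique _ _ ?_
        rw [show ((v + w : ↥I) : R) = (v : R) + (w : R) from rfl,
          (haddc (v : R) (w : R)).1, ht v, ht w, mul_add]
      have ht_smul : ∀ (r : R) (w : ↥I), t (r • w) = (cp r).1 * t w := by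
        intro r w
        refine ht_unique _ _ ?_
        rw [show ((r • w : ↥I) : R) = r * (w : R) from rfl,
          (hmulc r (w : R)).1, ht w]
        ring
      -- the two linear maps
      set χ : ↥I →ₗ[R] R :=
        { toFun := fun w => x * π (emb (t w))
          map_add' := by
            intro v w
            rw [ht_add, map_add, map_add, mul_add]
          map_smul' := by
            intro r w
            rw [ht_smul, map_mul, map_mul, RingHom.id_apply, smul_eq_mul]
            rw [← mul_assoc, mul_comm x (π (emb (cp r).1)), ← mul_assoc]
            congr 1
            rw [hrx r, hx, ← emb_X, ← map_mul, ← map_mul] } with hχ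
      set ψ : ↥I →ₗ[R] R :=
        { toFun := fun w => κ (PowerSeries.constantCoeff (t w)) * y
          map_add' := by
            intro v w
            rw [ht_add, map_add, hκadd, add_mul]
          map_smul' := by
            intro r w
            rw [ht_smul, map_mul, hκmul, RingHom.id_apply, smul_eq_mul]
            rw [mul_assoc, mul_comm (κ (PowerSeries.constantCoeff (t w))) y, ← mul_assoc,
              ← hry r]
            ring } with hψ
      have htz'unit : PowerSeries.constantCoeff (t ⟨z', hz'I⟩) ≠ 0 := by
        intro h0
        obtain ⟨s, hs⟩ := PowerSeries.X_dvd_iff.mpr h0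
        have hzz : (cp z').1 = PowerSeries.X ^ (n + 1) * s := by
          have h1 := ht ⟨z', hz'I⟩
          rw [hs] at h1
          rw [h1, pow_succ]
          ring
        have := PowerSeries.X_pow_dvd_iff.mp ⟨s, hzz⟩ n (by omega)
        exact hz'c this
      have hxmem : x ∈ I := by
        have hmem : x * π (emb (t ⟨z', hz'I⟩)) ∈ I := by
          have := mem_trace I χ ⟨z', hz'I⟩
          rw [hI] at this
          exact this
        have hvu : IsUnit (π (emb (t ⟨z', hz'I⟩))) := by
          have hfu : IsUnit (t ⟨z', hz'I⟩) :=
            PowerSeries.isUnit_iff_constantCoeff.mpr (isUnit_iff_ne_zero.mpr htz'unit)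
          obtain ⟨u, hu⟩ := hfu
          exact (hu ▸ u.isUnit).map ((π : MvPowerSeries (Fin 2) K →+* R).comp emb)
        obtain ⟨v, hv⟩ := hvu
        have : x = (x * π (emb (t ⟨z', hz'I⟩))) * ↑v⁻¹ := by
          rw [← hv, mul_assoc, Units.mul_inv, mul_one]
        rw [this]
        exact Ideal.mul_mem_right _ _ hmem
      have hymem : y ∈ I := by
        have hmem : κ (PowerSeries.constantCoeff (t ⟨z', hz'I⟩)) * y ∈ I := by
          have := mem_trace I ψ ⟨z', hz'I⟩
          rw [hI] at this
          exact this
        obtain ⟨v, hv⟩ := hκunit _ htz'unit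
        have : y = ↑v⁻¹ * (κ (PowerSeries.constantCoeff (t ⟨z', hz'I⟩)) * y) := by
          rw [← hv, ← mul_assoc, Units.inv_mul, one_mul]
        rw [this]
        exact Ideal.mul_mem_left _ _ hmem
      refine le_antisymm hIm (Ideal.span_le.mpr ?_)
      rintro a (rfl | rfl)
      · exact hxmem
      · exact hymem
  · -- each of the four ideals is a trace ideal
    rintro (rfl | rfl | rfl | rfl)
    · refine le_antisymm (trace_le _ _ fun f => ?_) (le_trace _)
      rintro a ⟨w, rfl⟩
      have hw : w = 0 := by
        apply Subtype.ext
        exact Ideal.mem_bot.mp w.2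
      rw [hw, map_zero]
      exact Submodule.zero_mem _
    · refine le_antisymm (trace_le _ _ fun f => ?_) (le_trace _)
      rintro a ⟨w, rfl⟩
      have hyel : (y : R) ∈ Ideal.span {y} :=
        Ideal.subset_span rfl
      set c := f ⟨y, hyel⟩ with hcdef
      have hcx : x * c = 0 := by
        have : (x • (⟨y, hyel⟩ : ↥(Ideal.span {y})) : ↥(Ideal.span {y})) = 0 := by
          apply Subtype.ext
          show x * y = 0
          exact hxy
        rw [hcdef, ← smul_eq_mul, ← map_smul, this, map_zero]
      have hc1 : (cp c).1 = 0 := by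
        have h1 := (hmulc x c).1
        have h2 : x * c = 0 := hcx
        rw [h2] at h1
        have h3 := ((hzero (0 : R)).mp rfl).1
        rw [h3] at h1  -- 0 = (cp x).1 * (cp c).1
        have h4 := h1.symm
        rw [hxdec.1] at h4
        have := mul_eq_zero.mp h4
        rcases this with h | h
        · exact absurd h PowerSeries.X_ne_zero
        · exact h
      have hcy : c ∈ Ideal.span {y} := by
        refine Ideal.mem_span_singleton.mpr ⟨κ (cp c).2, ?_⟩
        conv_lhs => rw [hcp c]
        rw [hc1, map_zero, map_zero, zero_add, mul_comm]
      -- any element of span{y} is r • y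
      obtain ⟨r, hr⟩ := Ideal.mem_span_singleton.mp w.2
      have hw : w = r • (⟨y, hyel⟩ : ↥(Ideal.span {y})) := by
        apply Subtype.ext
        show (w : R) = r * y
        rw [hr, mul_comm]
      rw [hw, map_smul]
      exact Ideal.mul_mem_left _ _ hcy
    · refine le_antisymm (trace_le _ _ fun f => ?_) (le_trace _)
      rintro a ⟨w, rfl⟩
      have hyw : y * (w : R) = 0 := by
        obtain ⟨a, b, hab⟩ := Ideal.mem_span_pair.mp w.2
        rw [← hab]
        have : y * (a * x + b * y) = a * (x * y) + b * (y * y) := by ring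
        rw [this, hxy, hyy, mul_zero, mul_zero, add_zero]
      have hcy : y * f w = 0 := by
        have : (y • w : ↥(Ideal.span {x, y})) = 0 := by
          apply Subtype.ext
          exact hyw
        calc y * f w = f (y • w) := by rw [map_smul]; rfl
        _ = 0 := by rw [this, map_zero]
      have h0 : PowerSeries.constantCoeff (cp (f w)).1 = 0 := by
        apply hκyinj
        rw [← hry (f w), mul_comm]
        exact hcy
      exact hspan_xy _ h0
    · exact le_antisymm le_top (le_trace ⊤)
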